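/- Let d_k have density f_{d_k}(x) = 2k·C(K,k)·Σ_{j=0}^{K−k} C(K−k,j)(−1)^j x^{2(k+j)−1}/D^{2(k+j)} on [0,D], and conditionally on d_k = x let α_k be exponentially distributed with mean x^{−η}. Then for z > 0, P(α_k ≤ z) = 1 − 2k·C(K,k)·Σ_{j=0}^{K−k} C(K−k,j)·((−1)^j / D^{2(k+j)})·(z^{−2(k+j)/η}/η)·γ(2(k+j)/η, z D^η). -/

import Mathlib

open MeasureTheory ProbabilityTheory Set intervalIntegral

noncomputable def lowerGamma (a b : ℝ) : ℝ :=
  ∫ t in (0:ℝ)..b, t ^ (a - 1) * Real.exp (-t)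

lemma key_integral (D η z : ℝ) (hD : 0 < D) (hη : 0 < η) (hz : 0 < z) (m : ℕ) :
    ∫ x in (0:ℝ)..D, (x:ℝ) ^ m * Real.exp (-(z * x ^ η)) =
      z ^ (-(((m:ℝ)+1)/η)) / η * lowerGamma (((m:ℝ)+1)/η) (z * D ^ η) := by
  set a : ℝ := ((m:ℝ)+1)/η with ha
  have ha0 : 0 < a := by positivity
  have hηa : η * a = (m:ℝ)+1 := by rw [ha]; field_simp
  set f : ℝ → ℝ := fun x => z * x ^ η with hf
  set f' : ℝ → ℝ := fun x => z * (η * x ^ (η - 1)) with hf'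
  set g : ℝ → ℝ := fun u => (u ^ (a-1) * Real.exp (-u)) * (z ^ (-a) / η) with hg
  have hDη : 0 < D ^ η := Real.rpow_pos_of_pos hD η
  have hfD : f D = z * D ^ η := rfl
  have hf0 : f 0 = 0 := by simp [hf, Real.zero_rpow hη.ne']
  have hfpos : ∀ x : ℝ, 0 < x → 0 < f x := fun x hx =>
    mul_pos hz (Real.rpow_pos_of_pos hx η)
  -- pointwise identity on (0, ∞)
  have hpt : ∀ x : ℝ, 0 < x → f' x • (g ∘ f) x = x ^ m * Real.exp (-(z * x ^ η)) := by
    intro x hx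
    have hxη : 0 < x ^ η := Real.rpow_pos_of_pos hx η
    have h1 : (z * x ^ η) ^ (a - 1) = z ^ (a-1) * (x ^ η) ^ (a-1) :=
      Real.mul_rpow hz.le hxη.le
    have h2 : (x ^ η) ^ (a-1) = x ^ (η * (a-1)) := (Real.rpow_mul hx.le η (a-1)).symm
    have e1 : x ^ (η - 1) * x ^ (η * (a - 1)) = x ^ (m:ℝ) := by
      rw [← Real.rpow_add hx]
      congr 1
      have : η * (a-1) = (m:ℝ) + 1 - η := by rw [mul_sub, hηa]; ring
      linarith
    have e2 : z * z ^ (a - 1) * z ^ (-a) = 1 := by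
      have hsum : a - 1 + -a = -1 := by ring
      rw [mul_assoc, ← Real.rpow_add hz, hsum, Real.rpow_neg_one]
      exact mul_inv_cancel₀ hz.ne'
    have e3 : x ^ (m:ℝ) = x ^ m := Real.rpow_natCast x m
    calc f' x • (g ∘ f) x
        = (z * z ^ (a-1) * z ^ (-a)) * (x ^ (η-1) * x ^ (η*(a-1))) *
            Real.exp (-(z * x ^ η)) * (η * η⁻¹) := by
          simp only [hf', hg, hf, Function.comp, smul_eq_mul, h1, h2, div_eq_mul_inv]
          ring
      _ = x ^ m * Real.exp (-(z * x ^ η)) := by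
          rw [e2, e1, e3, mul_inv_cancel₀ hη.ne']; ring
  have hgicc : IntegrableOn g (Icc 0 (f D)) := by
    have h1 : IntervalIntegrable (fun u : ℝ => u ^ (a-1)) volume 0 (f D) :=
      intervalIntegral.intervalIntegrable_rpow' (by linarith)
    have h2 := (h1.mul_continuousOn
      ((Real.continuous_exp.comp continuous_neg).continuousOn)).mul_const (z ^ (-a) / η)
    rw [intervalIntegrable_iff', uIcc_of_le (by positivity : (0:ℝ) ≤ f D)] at h2
    exact h2
  have hcf : Continuous f := continuous_const.mul (Real.continuous_rpow_const hη.le)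
  have hcont_m : Continuous (fun x : ℝ => x ^ m * Real.exp (-(z * x ^ η))) :=
    (continuous_pow m).mul (Real.continuous_exp.comp (continuous_neg.comp hcf))
  have hsub : (∫ x in (0:ℝ)..D, f' x • (g ∘ f) x) = ∫ u in (f 0)..(f D), g u := by
    apply integral_comp_smul_deriv''' (f := f) (f' := f') (g := g)
    · exact hcf.continuousOn
    · intro x hx
      rw [min_def, max_def] at hx
      have hx0 : 0 < x := by
        by_cases h : (0:ℝ) ≤ D <;> simp_all <;> linarith [hx.1]
      exact ((Real.hasDerivAt_rpow_const (Or.inl hx0.ne')).const_mul z).hasDerivWithinAt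
    · -- ContinuousOn g on f '' Ioo
      have : ContinuousOn g (Ioi 0) := by
        intro u hu
        exact (((Real.continuousAt_rpow_const u (a-1) (Or.inl (ne_of_gt hu))).mul
          (Real.continuous_exp.comp continuous_neg).continuousAt).mul
          continuousAt_const).continuousWithinAt
      refine this.mono ?_
      rintro y ⟨x, hx, rfl⟩
      rw [min_def, max_def] at hx
      have hx0 : 0 < x := by
        by_cases h : (0:ℝ) ≤ D <;> simp_all <;> linarith [hx.1]
      exact hfpos x hx0
    · refine hgicc.mono_set ?_
      rintro y ⟨x, hx, rfl⟩
      rw [uIcc_of_le hD.le] at hx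
      constructor
      · have := Real.rpow_nonneg hx.1 η; positivity
      · exact mul_le_mul_of_nonneg_left
          (Real.rpow_le_rpow hx.1 hx.2 hη.le) hz.le
    · -- integrability of x ↦ f' x • (g ∘ f) x on [[0,D]]
      rw [uIcc_of_le hD.le]
      have hbase : IntegrableOn (fun x : ℝ => x ^ m * Real.exp (-(z * x ^ η))) (Icc 0 D) :=
        hcont_m.integrableOn_Icc
      refine hbase.congr_fun_ae ?_ |>.mono_set (subset_refl _)
      have hne : ∀ᵐ x : ℝ ∂volume, x ≠ 0 := by
        rw [ae_iff]
        convert Real.volume_singleton (a := 0) using 2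
        ext x; simp
      filter_upwards [ae_restrict_mem measurableSet_Icc, ae_restrict_of_ae hne] with x hx hx0
      exact (hpt x (lt_of_le_of_ne hx.1 (Ne.symm hx0))).symm
  have hleft : (∫ x in (0:ℝ)..D, (x:ℝ) ^ m * Real.exp (-(z * x ^ η))) =
      ∫ x in (0:ℝ)..D, f' x • (g ∘ f) x := by
    apply intervalIntegral.integral_congr_ae
    filter_upwards with x hx
    rw [uIoc_of_le hD.le] at hx
    exact (hpt x hx.1).symm
  rw [hleft, hsub, hf0, hfD]
  rw [lowerGamma, hg]
  rw [intervalIntegral.integral_mul_const]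
  rw [mul_comm]

lemma density_closed (D x : ℝ) (hD : D ≠ 0) (K k : ℕ) (hk1 : 1 ≤ k) :
    ∑ j ∈ Finset.range (K - k + 1),
        ((K - k).choose j : ℝ) * (-1 : ℝ) ^ j * x ^ (2 * (k + j) - 1) / D ^ (2 * (k + j))
      = x ^ (2 * k - 1) / D ^ (2 * k) * (1 - x ^ 2 / D ^ 2) ^ (K - k) := by
  rw [show (1 - x ^ 2 / D ^ 2) = (-(x ^ 2 / D ^ 2) + 1) by ring, add_pow, Finset.mul_sum]
  refine Finset.sum_congr rfl fun j hj => ?_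
  have h2 : 2 * (k + j) - 1 = (2 * k - 1) + 2 * j := by omega
  have h3 : 2 * (k + j) = 2 * k + 2 * j := by ring
  rw [h2, h3, pow_add, pow_add]
  field_simp
  have hD2 : D ^ (2 * j) * (x ^ 2 / D ^ 2) ^ j = x ^ (2 * j) := by
    rw [div_pow, ← pow_mul, ← pow_mul]; field_simp
  rw [neg_pow]
  linear_combination (-(((K - k).choose j : ℝ) * (-1) ^ j * x ^ (2 * k - 1))) * hD2

/-- if `d_k` has the `k`-th distance-order-statistic density on `[0,D]`
and, conditionally on `d_k = x`, `α_k` is exponential with mean `x^(−η)`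
(i.e. `α_k = e · d_k^(−η)` with `e ~ Exp(1)` independent of `d_k`), then for `z > 0`,
`P(α_k ≤ z) = 1 − 2k C(K,k) Σ_{j=0}^{K−k} C(K−k,j) ((−1)^j/D^(2(k+j)))
  (z^(−2(k+j)/η)/η) γ(2(k+j)/η, z D^η)`. -/
theorem ordered_channel_gain_cdf {Ω : Type*} [MeasurableSpace Ω]
    (μp : Measure Ω) [IsProbabilityMeasure μp]
    (D η z : ℝ) (hD : 0 < D) (hη : 0 < η) (hz : 0 < z)
    (K k : ℕ) (hk1 : 1 ≤ k) (hk2 : k ≤ K)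
    (d e : Ω → ℝ) (hd : Measurable d) (he : Measurable e)
    (hindep : IndepFun d e μp)
    (hlaw_d : Measure.map d μp =
      volume.withDensity (fun x => ENNReal.ofReal
        (if x ∈ Icc 0 D then
          2 * (k : ℝ) * (K.choose k : ℝ) *
            ∑ j ∈ Finset.range (K - k + 1),
              ((K - k).choose j : ℝ) * (-1 : ℝ) ^ j * x ^ (2 * (k + j) - 1) / D ^ (2 * (k + j))
         else 0)))
    (hlaw_e : ∀ t : ℝ, 0 ≤ t → μp {ω | t < e ω} = ENNReal.ofReal (Real.exp (-t)))
    (α : Ω → ℝ) (hα : ∀ ω, α ω = e ω * d ω ^ (-η)) :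
    μp {ω | α ω ≤ z} =
      ENNReal.ofReal
        (1 - 2 * (k : ℝ) * (K.choose k : ℝ) *
          ∑ j ∈ Finset.range (K - k + 1),
            ((K - k).choose j : ℝ) * ((-1 : ℝ) ^ j / D ^ (2 * (k + j))) *
              (z ^ (-(2 * ((k : ℝ) + (j : ℝ))) / η) / η) *
              lowerGamma (2 * ((k : ℝ) + (j : ℝ)) / η) (z * D ^ η)) := by
  -- notation
  set ρ : ℝ → ℝ := fun x =>
      if x ∈ Icc 0 D then
        2 * (k : ℝ) * (K.choose k : ℝ) *
          ∑ j ∈ Finset.range (K - k + 1),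
            ((K - k).choose j : ℝ) * (-1 : ℝ) ^ j * x ^ (2 * (k + j) - 1) / D ^ (2 * (k + j))
       else 0 with hρ
  have hρmeas : Measurable ρ := by
    apply Measurable.ite measurableSet_Icc <;> fun_prop
  have hlaw_d' : Measure.map d μp = volume.withDensity (fun x => ENNReal.ofReal (ρ x)) :=
    hlaw_d
  have hρnn : ∀ x, 0 ≤ ρ x := by
    intro x
    simp only [hρ]
    split_ifs with hx
    · rw [mul_comm, density_closed D x hD.ne' K k hk1]
      have h1 : 0 ≤ 1 - x ^ 2 / D ^ 2 := by
        rw [sub_nonneg, div_le_one (by positivity)]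
        exact pow_le_pow_left₀ hx.1 hx.2 2
      have := hx.1
      positivity
    · exact le_refl 0
  -- the integrand and its integrability
  set F : ℝ → ℝ := fun x => ρ x * Real.exp (-(z * x ^ η)) with hF
  have hcf : Continuous fun x : ℝ => z * x ^ η :=
    continuous_const.mul (Real.continuous_rpow_const hη.le)
  have hexp : Continuous fun x : ℝ => Real.exp (-(z * x ^ η)) :=
    Real.continuous_exp.comp (continuous_neg.comp hcf)
  have hPcont : Continuous fun x : ℝ =>
      (2 * (k : ℝ) * (K.choose k : ℝ) *
        ∑ j ∈ Finset.range (K - k + 1),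
          ((K - k).choose j : ℝ) * (-1 : ℝ) ^ j * x ^ (2 * (k + j) - 1) / D ^ (2 * (k + j))) *
        Real.exp (-(z * x ^ η)) := by
    apply Continuous.mul _ hexp
    apply continuous_const.mul
    exact continuous_finset_sum _ fun j _ => (continuous_const.mul (continuous_pow _)).div_const _
  have hFind : F = (Icc (0:ℝ) D).indicator fun x =>
      (2 * (k : ℝ) * (K.choose k : ℝ) *
        ∑ j ∈ Finset.range (K - k + 1),
          ((K - k).choose j : ℝ) * (-1 : ℝ) ^ j * x ^ (2 * (k + j) - 1) / D ^ (2 * (k + j))) *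
        Real.exp (-(z * x ^ η)) := by
    funext x
    simp only [hF, hρ, indicator_apply]
    split_ifs <;> simp
  have hFint : Integrable F := by
    rw [hFind]
    exact (hPcont.integrableOn_Icc).integrable_indicator measurableSet_Icc
  have hFnn : ∀ x, 0 ≤ F x := fun x =>
    mul_nonneg (hρnn x) (Real.exp_nonneg _)
  -- step 1: reduce to the complement event
  have hαmeas : Measurable α := by
    have : α = fun ω => e ω * d ω ^ (-η) := funext hα
    rw [this]; fun_prop
  have hset : {ω | α ω ≤ z} = {ω | z < α ω}ᶜ := by
    ext ω; simp [not_lt]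
  have hmlt : MeasurableSet {ω | z < α ω} := measurableSet_lt measurable_const hαmeas
  -- step 2: compute μp {z < α} as a lintegral against the law of d
  set S : Set (ℝ × ℝ) := {p : ℝ × ℝ | z < p.2 * p.1 ^ (-η)} with hSdef
  have hSm : MeasurableSet S := by
    apply measurableSet_lt measurable_const
    fun_prop
  have hprod := (indepFun_iff_map_prod_eq_prod_map_map hd.aemeasurable he.aemeasurable).mp hindep
  have h1 : μp {ω | z < α ω} = (Measure.map d μp).prod (Measure.map e μp) S := by
    have : {ω | z < α ω} = (fun ω => (d ω, e ω)) ⁻¹' S := by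
      ext ω; simp [hSdef, hα ω]
    rw [this, ← Measure.map_apply (hd.prodMk he) hSm, hprod]
  have hefin : IsProbabilityMeasure (Measure.map e μp) :=
    Measure.isProbabilityMeasure_map he.aemeasurable
  have h2 : (Measure.map d μp).prod (Measure.map e μp) S =
      ∫⁻ x, (Measure.map e μp) (Prod.mk x ⁻¹' S) ∂(Measure.map d μp) :=
    Measure.prod_apply hSm
  -- a.e. x ∈ Ioc 0 D w.r.t. law of d
  have hae : ∀ᵐ x ∂(Measure.map d μp), x ∈ Ioc 0 D := by
    rw [hlaw_d', ae_iff]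
    refine measure_mono_null (?_ : _ ⊆ (Icc 0 D)ᶜ ∪ {0}) ?_
    · intro x hx
      simp only [mem_setOf_eq, mem_Ioc, not_and_or, not_lt, not_le] at hx
      rcases hx with h | h
      · rcases eq_or_lt_of_le h with rfl | h'
        · exact Or.inr rfl
        · exact Or.inl (fun hmem => absurd hmem.1 (not_le.mpr h'))
      · exact Or.inl (fun hmem => absurd hmem.2 (not_le.mpr h))
    · apply measure_union_null
      · rw [withDensity_apply _ measurableSet_Icc.compl]
        rw [setLIntegral_congr_fun measurableSet_Icc.compl
          (fun x hx => by
            simp only [hρ]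
            rw [if_neg hx, ENNReal.ofReal_zero])]
        exact lintegral_zero
      · exact withDensity_absolutelyContinuous _ _ Real.volume_singleton
  -- evaluate the section measure a.e.
  have h3 : ∫⁻ x, (Measure.map e μp) (Prod.mk x ⁻¹' S) ∂(Measure.map d μp) =
      ∫⁻ x, ENNReal.ofReal (Real.exp (-(z * x ^ η))) ∂(Measure.map d μp) := by
    apply lintegral_congr_ae
    filter_upwards [hae] with x hx
    have hx0 : 0 < x := hx.1
    have hxη : 0 < x ^ η := Real.rpow_pos_of_pos hx0 η
    have hsec : Prod.mk x ⁻¹' S = Ioi (z * x ^ η) := by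
      ext y
      simp only [hSdef, mem_preimage, mem_setOf_eq, mem_Ioi]
      rw [Real.rpow_neg hx0.le, ← div_eq_mul_inv, lt_div_iff₀ hxη]
    rw [hsec, Measure.map_apply he measurableSet_Ioi]
    have : e ⁻¹' Ioi (z * x ^ η) = {ω | z * x ^ η < e ω} := rfl
    rw [this, hlaw_e _ (by positivity)]
  -- unfold the density
  have h4 : ∫⁻ x, ENNReal.ofReal (Real.exp (-(z * x ^ η))) ∂(Measure.map d μp) =
      ∫⁻ x, ENNReal.ofReal (F x) := by
    rw [hlaw_d']
    rw [lintegral_withDensity_eq_lintegral_mul _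
      (by exact ENNReal.measurable_ofReal.comp hρmeas) (by fun_prop)]
    apply lintegral_congr fun x => ?_
    show ENNReal.ofReal (ρ x) * ENNReal.ofReal (Real.exp (-(z * x ^ η))) = ENNReal.ofReal (F x)
    rw [← ENNReal.ofReal_mul (hρnn x)]
  have h5 : ∫⁻ x, ENNReal.ofReal (F x) = ENNReal.ofReal (∫ x, F x) :=
    (ofReal_integral_eq_lintegral_ofReal hFint
      (Filter.Eventually.of_forall hFnn)).symm
  -- the real integral
  have hIcc : (∫ x, F x) = ∫ x in (0:ℝ)..D,
      (2 * (k : ℝ) * (K.choose k : ℝ) *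
        ∑ j ∈ Finset.range (K - k + 1),
          ((K - k).choose j : ℝ) * (-1 : ℝ) ^ j * x ^ (2 * (k + j) - 1) / D ^ (2 * (k + j))) *
        Real.exp (-(z * x ^ η)) := by
    rw [hFind, MeasureTheory.integral_indicator measurableSet_Icc, integral_Icc_eq_integral_Ioc,
      ← intervalIntegral.integral_of_le hD.le]
  -- evaluate the interval integral termwise
  set c : ℝ := 2 * (k : ℝ) * (K.choose k : ℝ) with hc
  have hsum : (∫ x in (0:ℝ)..D,
      (2 * (k : ℝ) * (K.choose k : ℝ) *
        ∑ j ∈ Finset.range (K - k + 1),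
          ((K - k).choose j : ℝ) * (-1 : ℝ) ^ j * x ^ (2 * (k + j) - 1) / D ^ (2 * (k + j))) *
        Real.exp (-(z * x ^ η)))
      = c * ∑ j ∈ Finset.range (K - k + 1),
          ((K - k).choose j : ℝ) * ((-1 : ℝ) ^ j / D ^ (2 * (k + j))) *
            (z ^ (-(2 * ((k : ℝ) + (j : ℝ))) / η) / η) *
            lowerGamma (2 * ((k : ℝ) + (j : ℝ)) / η) (z * D ^ η) := by
    have hEq : EqOn (fun x =>
        (c * ∑ j ∈ Finset.range (K - k + 1),
          ((K - k).choose j : ℝ) * (-1 : ℝ) ^ j * x ^ (2 * (k + j) - 1) / D ^ (2 * (k + j))) *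
          Real.exp (-(z * x ^ η)))
        (fun x => ∑ j ∈ Finset.range (K - k + 1),
          (c * ((K - k).choose j : ℝ) * (-1 : ℝ) ^ j / D ^ (2 * (k + j))) *
            (x ^ (2 * (k + j) - 1) * Real.exp (-(z * x ^ η))))
        (uIcc (0:ℝ) D) := by
      intro x _
      simp only
      rw [Finset.mul_sum, Finset.sum_mul]
      exact Finset.sum_congr rfl fun j _ => by ring
    rw [intervalIntegral.integral_congr hEq]
    rw [intervalIntegral.integral_finset_sum (fun j _ => by
      apply Continuous.intervalIntegrable; exact continuous_const.mul ((continuous_pow _).mul hexp))]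
    rw [Finset.mul_sum]
    refine Finset.sum_congr rfl fun j _ => ?_
    rw [intervalIntegral.integral_const_mul, key_integral D η z hD hη hz (2 * (k + j) - 1)]
    have hcast : ((2 * (k + j) - 1 : ℕ) : ℝ) + 1 = 2 * ((k : ℝ) + (j : ℝ)) := by
      have h1 : (1:ℕ) ≤ 2 * (k + j) := by omega
      push_cast [Nat.cast_sub h1]
      ring
    rw [hcast, neg_div]
    ring
  -- assemble
  set Ssum : ℝ := c * ∑ j ∈ Finset.range (K - k + 1),
      ((K - k).choose j : ℝ) * ((-1 : ℝ) ^ j / D ^ (2 * (k + j))) *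
        (z ^ (-(2 * ((k : ℝ) + (j : ℝ))) / η) / η) *
        lowerGamma (2 * ((k : ℝ) + (j : ℝ)) / η) (z * D ^ η) with hSsum
  have hFS : (∫ x, F x) = Ssum := by rw [hIcc, hsum]
  have hSnn : 0 ≤ Ssum := hFS ▸ integral_nonneg hFnn
  have hPz : μp {ω | z < α ω} = ENNReal.ofReal Ssum := by
    rw [h1, h2, h3, h4, h5, hFS]
  rw [hset, prob_compl_eq_one_sub hmlt, hPz,
    ← ENNReal.ofReal_one, ← ENNReal.ofReal_sub _ hSnn]
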